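/- Let U₁,…,Uₙ, U be d-dimensional random vectors with ‖Uₙ‖_∞ ≤ ξₙ almost surely, suppose ‖U‖_∞ has a finite fourth moment, and let V be a random variable with E[exp(ς|V|)] < ∞ for some ς > 0. Set γₙ = E‖Uₙ − U‖₂². Then for all n ≥ 2, E(‖Uₙ − U‖₂²·|V|) ≤ (4/ς)·γₙ·log n + C·d·(ξₙ² + 1)/n, where C is a constant depending only on E‖U‖_∞⁴, E[exp(ς|V|)] and ς. -/

import Mathlib

open MeasureTheory

set_option maxHeartbeats 1000000 in
/-- Lemma on multiplying a converging squared error by a sub-exponential weight: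
if ‖Uₙ‖_∞ ≤ ξₙ a.s., ‖U‖_∞ has a finite fourth moment, and E exp(ς|V|) < ∞,
then with γₙ = E‖Uₙ − U‖₂² there is a constant C (independent of n) such that
for all n ≥ 2, E(‖Uₙ − U‖₂² |V|) ≤ (4/ς) γₙ log n + C d (ξₙ² + 1)/n. -/
theorem sub_exp_weighted_convergence {Ω : Type*} [MeasurableSpace Ω]
    (μ : Measure Ω) [IsProbabilityMeasure μ] (d : ℕ)
    (U : ℕ → Ω → (Fin d → ℝ)) (Ulim : Ω → (Fin d → ℝ)) (V : Ω → ℝ)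
    (ξ : ℕ → ℝ) (ς : ℝ) (hς : 0 < ς)
    (hUm : ∀ n, Measurable (U n)) (hUlimm : Measurable Ulim) (hVm : Measurable V)
    (hbound : ∀ n, ∀ᵐ ω ∂μ, ‖U n ω‖ ≤ ξ n)
    (hU4 : Integrable (fun ω => ‖Ulim ω‖ ^ 4) μ)
    (hV : Integrable (fun ω => Real.exp (ς * |V ω|)) μ) :
    ∃ C : ℝ, ∀ n : ℕ, 2 ≤ n →
      ∫ ω, (∑ i, (U n ω i - Ulim ω i) ^ 2) * |V ω| ∂μ ≤
        (4 / ς) * (∫ ω, ∑ i, (U n ω i - Ulim ω i) ^ 2 ∂μ) * Real.log n +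
          C * d * (ξ n ^ 2 + 1) / n := by
  classical
  set A := ∫ ω, Real.exp (ς * |V ω|) ∂μ with hAdef
  set B := ∫ ω, ‖Ulim ω‖ ^ 4 ∂μ with hBdef
  have hA : 0 ≤ A := integral_nonneg fun ω => (Real.exp_pos _).le
  have hB : 0 ≤ B := integral_nonneg fun ω => by positivity
  refine ⟨4 / ς * (2 * A + B), ?_⟩
  intro n hn
  have hn2 : (2 : ℝ) ≤ (n : ℝ) := by exact_mod_cast hn
  have hnpos : (0 : ℝ) < (n : ℝ) := by linarith
  have hlog : 0 ≤ Real.log n := Real.log_nonneg (by linarith)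
  have hd : (0 : ℝ) ≤ (d : ℝ) := Nat.cast_nonneg d
  set S : Ω → ℝ := fun ω => ∑ i, (U n ω i - Ulim ω i) ^ 2 with hSdef
  have hS0 : ∀ ω, 0 ≤ S ω := fun ω => Finset.sum_nonneg fun i _ => sq_nonneg _
  have hSm : Measurable S := by
    apply Finset.measurable_sum
    intro i _
    exact (((measurable_pi_apply i).comp (hUm n)).sub
      ((measurable_pi_apply i).comp hUlimm)).pow_const 2
  have hstep2 : ∀ᵐ ω ∂μ, S ω ≤ 2 * d * (ξ n ^ 2 + ‖Ulim ω‖ ^ 2) := by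
    filter_upwards [hbound n] with ω hω
    have hterm : ∀ i : Fin d, (U n ω i - Ulim ω i) ^ 2 ≤ 2 * ξ n ^ 2 + 2 * ‖Ulim ω‖ ^ 2 := by
      intro i
      have h1 : |U n ω i| ≤ ξ n := le_trans (by simpa using norm_le_pi_norm (U n ω) i) hω
      have h2 : |Ulim ω i| ≤ ‖Ulim ω‖ := by simpa using norm_le_pi_norm (Ulim ω) i
      have h3 : -(|U n ω i| * |Ulim ω i|) ≤ U n ω i * Ulim ω i := by
        rw [← abs_mul]; exact neg_abs_le _
      nlinarith [sq_abs (U n ω i), sq_abs (Ulim ω i), abs_nonneg (U n ω i),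
        abs_nonneg (Ulim ω i), sq_nonneg (|U n ω i| - |Ulim ω i|), norm_nonneg (Ulim ω)]
    calc S ω ≤ ∑ _i : Fin d, (2 * ξ n ^ 2 + 2 * ‖Ulim ω‖ ^ 2) :=
          Finset.sum_le_sum fun i _ => hterm i
      _ = d * (2 * ξ n ^ 2 + 2 * ‖Ulim ω‖ ^ 2) := by
          simp only [Finset.sum_const, Finset.card_univ, Fintype.card_fin, nsmul_eq_mul]
      _ = 2 * d * (ξ n ^ 2 + ‖Ulim ω‖ ^ 2) := by ring
  have key : ∀ᵐ ω ∂μ, S ω * |V ω| ≤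
      (4 / ς * Real.log n) * S ω +
        4 / ς / n * (2 * d * ξ n ^ 2 * Real.exp (ς * |V ω|) +
          d * (‖Ulim ω‖ ^ 4 + Real.exp (ς * |V ω|))) := by
    filter_upwards [hstep2] with ω hω
    set s := S ω with hsdef
    set v := |V ω| with hvdef
    have hv0 : 0 ≤ v := abs_nonneg _
    have hs0 : 0 ≤ s := hS0 ω
    have hE1 : Real.exp (ς * v / 2) ≤ Real.exp (ς * v) :=
      Real.exp_le_exp.2 (by nlinarith)
    have hEsq : Real.exp (ς * v / 2) * Real.exp (ς * v / 2) = Real.exp (ς * v) := by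
      rw [← Real.exp_add]; ring_nf
    have step1 : s * v ≤ (4 / ς * Real.log n) * s + 4 / ς / n * (s * Real.exp (ς * v / 2)) := by
      rcases le_or_gt v (4 / ς * Real.log n) with h | h
      · have h2 : 0 ≤ 4 / ς / n * (s * Real.exp (ς * v / 2)) := by positivity
        nlinarith
      · have hx : ς * v / 4 ≤ Real.exp (ς * v / 4) := by
          have := Real.add_one_le_exp (ς * v / 4); linarith
        have hlogv : Real.log n ≤ ς * v / 4 := by
          have h4 := mul_lt_mul_of_pos_left h hς
          have h5 : ς * (4 / ς * Real.log n) = 4 * Real.log n := by field_simp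
          rw [h5] at h4; linarith
        have hn_le : (n : ℝ) ≤ Real.exp (ς * v / 4) := by
          calc (n : ℝ) = Real.exp (Real.log n) := (Real.exp_log hnpos).symm
            _ ≤ Real.exp (ς * v / 4) := Real.exp_le_exp.2 hlogv
        have h5 : v ≤ 4 / ς * Real.exp (ς * v / 4) := by
          calc v = 4 / ς * (ς * v / 4) := by field_simp
            _ ≤ 4 / ς * Real.exp (ς * v / 4) :=
                mul_le_mul_of_nonneg_left hx (by positivity)
        have hv_le : v ≤ 4 / ς / n * Real.exp (ς * v / 2) := by
          rw [div_mul_eq_mul_div, le_div_iff₀ hnpos]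
          calc v * n ≤ (4 / ς * Real.exp (ς * v / 4)) * Real.exp (ς * v / 4) :=
              mul_le_mul h5 hn_le (le_of_lt hnpos) (by positivity)
            _ = 4 / ς * Real.exp (ς * v / 2) := by
                rw [mul_assoc, ← Real.exp_add]; ring_nf
        have h6 := mul_le_mul_of_nonneg_left hv_le hs0
        have hι : 0 ≤ (4 / ς * Real.log n) * s := by positivity
        nlinarith
    have hfinal : s * Real.exp (ς * v / 2) ≤
        2 * d * ξ n ^ 2 * Real.exp (ς * v) + d * (‖Ulim ω‖ ^ 4 + Real.exp (ς * v)) := by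
      have hEpos : (0 : ℝ) < Real.exp (ς * v / 2) := Real.exp_pos _
      have hN : (0 : ℝ) ≤ ‖Ulim ω‖ := norm_nonneg _
      have hb1 := mul_le_mul_of_nonneg_right hω hEpos.le
      have hb2 : ξ n ^ 2 * Real.exp (ς * v / 2) ≤ ξ n ^ 2 * Real.exp (ς * v) :=
        mul_le_mul_of_nonneg_left hE1 (sq_nonneg _)
      have hb3 : 2 * (‖Ulim ω‖ ^ 2 * Real.exp (ς * v / 2)) ≤ ‖Ulim ω‖ ^ 4 + Real.exp (ς * v) := by
        nlinarith [sq_nonneg (‖Ulim ω‖ ^ 2 - Real.exp (ς * v / 2))]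
      nlinarith [mul_le_mul_of_nonneg_left hb2 (show (0:ℝ) ≤ 2 * d by positivity),
        mul_le_mul_of_nonneg_left hb3 hd]
    have hc : (0 : ℝ) ≤ 4 / ς / n := by positivity
    have h7 := mul_le_mul_of_nonneg_left hfinal hc
    linarith
  have hg_int : Integrable (fun ω => 2 * d * ξ n ^ 2 * Real.exp (ς * |V ω|) +
      d * (‖Ulim ω‖ ^ 4 + Real.exp (ς * |V ω|))) μ :=
    (hV.const_mul _).add ((hU4.add hV).const_mul _)
  have hS_int : Integrable S μ := by
    have hdom : Integrable (fun ω => 2 * d * (ξ n ^ 2 + (‖Ulim ω‖ ^ 4 + 1))) μ :=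
      (((integrable_const (ξ n ^ 2)).add (hU4.add (integrable_const 1))).const_mul _)
    refine hdom.mono' hSm.aestronglyMeasurable ?_
    filter_upwards [hstep2] with ω hω
    have hN2 : ‖Ulim ω‖ ^ 2 ≤ ‖Ulim ω‖ ^ 4 + 1 := by nlinarith [sq_nonneg (‖Ulim ω‖ ^ 2 - 1)]
    rw [Real.norm_eq_abs, abs_of_nonneg (hS0 ω)]
    nlinarith [mul_le_mul_of_nonneg_left hN2 (show (0:ℝ) ≤ 2 * d by positivity)]
  have hRHS_int : Integrable (fun ω => (4 / ς * Real.log n) * S ω +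
      4 / ς / n * (2 * d * ξ n ^ 2 * Real.exp (ς * |V ω|) +
        d * (‖Ulim ω‖ ^ 4 + Real.exp (ς * |V ω|)))) μ :=
    (hS_int.const_mul _).add (hg_int.const_mul _)
  have h1 : ∫ ω, S ω * |V ω| ∂μ ≤ ∫ ω, ((4 / ς * Real.log n) * S ω +
      4 / ς / n * (2 * d * ξ n ^ 2 * Real.exp (ς * |V ω|) +
        d * (‖Ulim ω‖ ^ 4 + Real.exp (ς * |V ω|)))) ∂μ :=
    integral_mono_of_nonneg
      (Filter.Eventually.of_forall fun ω => mul_nonneg (hS0 ω) (abs_nonneg _))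
      hRHS_int key
  have h2 : ∫ ω, ((4 / ς * Real.log n) * S ω +
      4 / ς / n * (2 * d * ξ n ^ 2 * Real.exp (ς * |V ω|) +
        d * (‖Ulim ω‖ ^ 4 + Real.exp (ς * |V ω|)))) ∂μ =
      (4 / ς * Real.log n) * (∫ ω, S ω ∂μ) +
        4 / ς / n * (2 * d * ξ n ^ 2 * A + d * (B + A)) := by
    have hgint1 : Integrable (fun ω => 2 * (d:ℝ) * ξ n ^ 2 * Real.exp (ς * |V ω|)) μ :=
      hV.const_mul _
    have hgint2 : Integrable (fun ω => (d:ℝ) * (‖Ulim ω‖ ^ 4 + Real.exp (ς * |V ω|))) μ :=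
      (hU4.add hV).const_mul _
    rw [integral_add (hS_int.const_mul _) (hg_int.const_mul _),
      integral_const_mul, integral_const_mul,
      integral_add hgint1 hgint2,
      integral_const_mul, integral_const_mul, integral_add hU4 hV]
  have hγ0 : 0 ≤ ∫ ω, S ω ∂μ := integral_nonneg hS0
  have e2 : 4 / ς / n * (2 * d * ξ n ^ 2 * A + d * (B + A)) ≤
      (4 / ς * (2 * A + B)) * d * (ξ n ^ 2 + 1) / n := by
    have hinner : 2 * d * ξ n ^ 2 * A + d * (B + A) ≤ (2 * A + B) * d * (ξ n ^ 2 + 1) := by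
      nlinarith [mul_nonneg hd hA, mul_nonneg (mul_nonneg hd hB) (sq_nonneg (ξ n)),
        mul_nonneg hd hB, mul_nonneg (mul_nonneg hd hA) (sq_nonneg (ξ n))]
    calc 4 / ς / n * (2 * d * ξ n ^ 2 * A + d * (B + A))
        ≤ 4 / ς / n * ((2 * A + B) * d * (ξ n ^ 2 + 1)) :=
          mul_le_mul_of_nonneg_left hinner (by positivity)
      _ = (4 / ς * (2 * A + B)) * d * (ξ n ^ 2 + 1) / n := by ring
  have e1 : (4 / ς * Real.log n) * (∫ ω, S ω ∂μ) =
      4 / ς * (∫ ω, S ω ∂μ) * Real.log n := by ring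
  calc ∫ ω, S ω * |V ω| ∂μ ≤ (4 / ς * Real.log n) * (∫ ω, S ω ∂μ) +
        4 / ς / n * (2 * d * ξ n ^ 2 * A + d * (B + A)) := h2 ▸ h1
    _ ≤ 4 / ς * (∫ ω, S ω ∂μ) * Real.log n +
        (4 / ς * (2 * A + B)) * d * (ξ n ^ 2 + 1) / n := by linarith
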